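/- arXiv:2301.09867 — 3 statements merged into one kernel-verified Lean document; each statement's English description precedes it below -/
import Mathlib

section
/- For every even m ≥ 4, the graph H_m satisfies δ(H_m) = (|V(H_m)| − 3)/2 and π*_2(H_m) ≠ π*(H_m). Hence there exist graphs with minimum degree roughly half the order whose 2-restricted optimal pebbling number exceeds their optimal pebbling number. -/
open Finset
set_option linter.unusedSectionVars false
set_option linter.unusedVariables false
set_option linter.unnecessarySeqFocus false
set_option linter.unreachableTactic false
set_option linter.unusedTactic false

/-- A single pebbling move: remove two pebbles from `u` and place one on an
adjacent vertex `v`. -/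
def PebblingStep {V : Type*} [DecidableEq V] (G : SimpleGraph V) (D D' : V → ℕ) : Prop :=
  ∃ u v, G.Adj u v ∧ 2 ≤ D u ∧
    D' = Function.update (Function.update D u (D u - 2)) v (D v + 1)

/-- `D'` is obtained from `D` by an executable sequence of pebbling moves. -/
def PebblingReaches {V : Type*} [DecidableEq V] (G : SimpleGraph V) : (V → ℕ) → (V → ℕ) → Prop :=
  Relation.ReflTransGen (PebblingStep G)

/-- A vertex `v` is `k`-reachable under `D`. -/
def KReachable {V : Type*} [DecidableEq V] (G : SimpleGraph V) (D : V → ℕ) (k : ℕ) (v : V) : Prop :=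
  ∃ D', PebblingReaches G D D' ∧ k ≤ D' v

/-- A distribution is solvable if every vertex is (1-)reachable. -/
def Solvable {V : Type*} [DecidableEq V] (G : SimpleGraph V) (D : V → ℕ) : Prop :=
  ∀ v, KReachable G D 1 v

/-- The size of a pebble distribution. -/
def distSize {V : Type*} [Fintype V] (D : V → ℕ) : ℕ := ∑ v, D v

/-- The optimal pebbling number `π*`. -/
noncomputable def optPebbling {V : Type*} [Fintype V] [DecidableEq V] (G : SimpleGraph V) : ℕ :=
  sInf {n | ∃ D : V → ℕ, Solvable G D ∧ distSize D = n}

/-- The `t`-restricted optimal pebbling number `π*_t`. -/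
noncomputable def optPebblingRes {V : Type*} [Fintype V] [DecidableEq V]
    (G : SimpleGraph V) (t : ℕ) : ℕ :=
  sInf {n | ∃ D : V → ℕ, (∀ v, D v ≤ t) ∧ Solvable G D ∧ distSize D = n}

/-- The base relation for the graph `H_m`.  Vertices `Sum.inl i` are `u_{i+1}`,
vertices `Sum.inr (Sum.inl i)` are `v_{i+1}`, and `Sum.inr (Sum.inr ())` is `w`
(so 0-based index `i` corresponds to the paper's index `i+1`; the paper's odd
indices are the 0-based even ones). Within each copy of `K_m`, the matching
pairs `{2k, 2k+1}` (0-based) are the removed edges. -/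
def HmRel (m : ℕ) : (Fin m ⊕ (Fin m ⊕ Unit)) → (Fin m ⊕ (Fin m ⊕ Unit)) → Prop
  | .inl i, .inl j => i.val / 2 ≠ j.val / 2
  | .inr (.inl i), .inr (.inl j) => i.val / 2 ≠ j.val / 2
  | .inl i, .inr (.inl j) => i = j ∧ i.val % 2 = 1
  | .inl i, .inr (.inr _) => i.val % 2 = 0
  | .inr (.inl i), .inr (.inr _) => i.val % 2 = 0
  | _, _ => False

/-- The graph `H_m` from the paper. -/
def Hm (m : ℕ) : SimpleGraph (Fin m ⊕ (Fin m ⊕ Unit)) := SimpleGraph.fromRel (HmRel m)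

/-- The vertex `w` of `H_m`. -/
def hmW (m : ℕ) : Fin m ⊕ (Fin m ⊕ Unit) := Sum.inr (Sum.inr ())


section Generic
variable {V : Type*} [Fintype V] [DecidableEq V] (G : SimpleGraph V)

lemma le_distSize (f : V → ℕ) (a : V) : f a ≤ distSize f :=
  Finset.single_le_sum (fun i _ => Nat.zero_le _) (mem_univ a)

lemma add_le_distSize (f : V → ℕ) {a b : V} (h : a ≠ b) : f a + f b ≤ distSize f := by
  calc f a + f b = ∑ x ∈ ({a, b} : Finset V), f x := (Finset.sum_pair h).symm
    _ ≤ ∑ x ∈ univ, f x := Finset.sum_le_sum_of_subset (subset_univ _)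

lemma add3_le_distSize (f : V → ℕ) {a b c : V} (hab : a ≠ b) (hac : a ≠ c) (hbc : b ≠ c) :
    f a + f b + f c ≤ distSize f := by
  have h1 : ∑ x ∈ ({a, b, c} : Finset V), f x = f a + (f b + f c) := by
    rw [Finset.sum_insert (by simp [hab, hac]), Finset.sum_pair hbc]
  calc f a + f b + f c = ∑ x ∈ ({a, b, c} : Finset V), f x := by rw [h1]; ring
    _ ≤ ∑ x ∈ univ, f x := Finset.sum_le_sum_of_subset (subset_univ _)

lemma distSize_step {D D' : V → ℕ} (h : PebblingStep G D D') :
    distSize D' + 1 = distSize D := by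
  obtain ⟨a, b, hab, h2, rfl⟩ := h
  have hne : a ≠ b := hab.ne
  set f := Function.update (Function.update D a (D a - 2)) b (D b + 1) with hf
  have h1 : ∑ x ∈ univ.erase b, f x + f b = ∑ x ∈ univ, f x :=
    Finset.sum_erase_add _ _ (mem_univ b)
  have ha : a ∈ univ.erase b := by simp [Finset.mem_erase, hne]
  have h2' : ∑ x ∈ (univ.erase b).erase a, f x + f a = ∑ x ∈ univ.erase b, f x :=
    Finset.sum_erase_add _ _ ha
  have e1 : f b = D b + 1 := by simp [hf]
  have e2 : f a = D a - 2 := by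
    rw [hf, Function.update_of_ne hne, Function.update_self]
  have e4 : ∑ x ∈ (univ.erase b).erase a, f x = ∑ x ∈ (univ.erase b).erase a, D x := by
    refine Finset.sum_congr rfl ?_
    intro z hz
    simp only [Finset.mem_erase] at hz
    rw [hf, Function.update_of_ne hz.2.1, Function.update_of_ne hz.1]
  have g1 : ∑ x ∈ univ.erase b, D x + D b = ∑ x ∈ univ, D x :=
    Finset.sum_erase_add _ _ (mem_univ b)
  have g2 : ∑ x ∈ (univ.erase b).erase a, D x + D a = ∑ x ∈ univ.erase b, D x :=
    Finset.sum_erase_add _ _ ha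
  unfold distSize
  omega

/-- two pebbles can be gathered at `u` (sound for distributions of size ≤ 4). -/
def TwoCond (D : V → ℕ) (u : V) : Prop :=
  2 ≤ D u
  ∨ (∃ x, G.Adj x u ∧ 4 ≤ D x)
  ∨ (∃ x y, x ≠ y ∧ G.Adj x u ∧ G.Adj y u ∧ 2 ≤ D x ∧ 2 ≤ D y)
  ∨ (1 ≤ D u ∧ ∃ x, G.Adj x u ∧ 2 ≤ D x)
  ∨ (1 ≤ D u ∧ ∃ x, G.Adj x u ∧ 1 ≤ D x ∧ ∃ y, G.Adj y x ∧ 2 ≤ D y)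

def RCond (D : V → ℕ) (t : V) : Prop :=
  1 ≤ D t ∨ ∃ u, G.Adj u t ∧ TwoCond G D u

lemma rcond_step {D D1 : V → ℕ} {t : V} (hsize : distSize D ≤ 4)
    (hstep : PebblingStep G D D1) (hR : RCond G D1 t) : RCond G D t := by
  have hs1 := distSize_step G hstep
  obtain ⟨a, b, hab, h2a, rfl⟩ := hstep
  set D1 := Function.update (Function.update D a (D a - 2)) b (D b + 1) with hD1def
  have hne : a ≠ b := hab.ne
  have hval : ∀ z, D1 z = if z = b then D b + 1 else if z = a then D a - 2 else D z := by
    intro z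
    by_cases hz : z = b
    · subst hz; simp [hD1def]
    · by_cases hz' : z = a
      · subst hz'; simp [hD1def, Function.update_of_ne hne, hz]
      · simp [hD1def, Function.update_of_ne hz, Function.update_of_ne hz', hz, hz']
  have hsD1 : distSize D1 ≤ 3 := by omega
  have key1 : ∀ u, G.Adj u t → 2 ≤ D1 u → RCond G D t := by
    intro u hut h
    rw [hval] at h
    by_cases hub : u = b
    · have h1b : 1 ≤ D b := by simp [hub] at h; omega
      exact Or.inr ⟨b, hub ▸ hut, Or.inr (Or.inr (Or.inr (Or.inl ⟨h1b, a, hab, h2a⟩)))⟩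
    · by_cases hua : u = a
      · exact Or.inr ⟨a, hua ▸ hut, Or.inl h2a⟩
      · simp [hub, hua] at h
        exact Or.inr ⟨u, hut, Or.inl h⟩
  have key4 : ∀ u x, G.Adj u t → G.Adj x u → 1 ≤ D1 u → 2 ≤ D1 x → RCond G D t := by
    intro u x hut hxu h1u h2x
    by_cases hxeq : x = u
    · exact key1 u hut (hxeq ▸ h2x)
    rw [hval] at h1u h2x
    by_cases hua : u = a
    · exact Or.inr ⟨a, hua ▸ hut, Or.inl h2a⟩
    by_cases hub : u = b
    · by_cases hxa : x = a
      · simp [hxa, hne] at h2x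
        exact Or.inr ⟨b, hub ▸ hut, Or.inr (Or.inl ⟨a, hab, by omega⟩)⟩
      · have hxb : x ≠ b := fun hh => hxeq (hh.trans hub.symm)
        simp [hxa, hxb] at h2x
        exact Or.inr ⟨b, hub ▸ hut, Or.inr (Or.inr (Or.inl
          ⟨x, a, hxa, hub ▸ hxu, hab, h2x, h2a⟩))⟩
    · simp [hua, hub] at h1u
      by_cases hxa : x = a
      · simp [hxa, hne] at h2x
        have := add_le_distSize D (show a ≠ u from Ne.symm hua)
        exfalso; omega
      by_cases hxb : x = b
      · simp [hxb] at h2x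
        exact Or.inr ⟨u, hut, Or.inr (Or.inr (Or.inr (Or.inr
          ⟨h1u, b, hxb ▸ hxu, by omega, a, hab, h2a⟩)))⟩
      · simp [hxa, hxb] at h2x
        have hxu' : x ≠ u := hxeq
        have := add3_le_distSize D hxa hxu' (show a ≠ u from Ne.symm hua)
        exfalso; omega
  rcases hR with h | ⟨u, hut, htwo⟩
  · rw [hval] at h
    by_cases htb : t = b
    · subst htb
      exact Or.inr ⟨a, hab, Or.inl h2a⟩
    · by_cases hta : t = a
      · subst hta; exact Or.inl (by omega)
      · simp [htb, hta] at h; exact Or.inl h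
  rcases htwo with h | ⟨x, hxu, h4⟩ | ⟨x, y, hxy, hxu, hyu, h2x, h2y⟩ | ⟨h1u, x, hxu, h2x⟩ |
    ⟨h1u, x, hxu, h1x, y, hyx, h2y⟩
  · exact key1 u hut h
  · exfalso; have := le_distSize D1 x; omega
  · exfalso; have := add_le_distSize D1 hxy; omega
  · exact key4 u x hut hxu h1u h2x
  · by_cases hxu' : x = u
    · exact key4 u y hut (hxu' ▸ hyx) h1u h2y
    by_cases hyx' : y = x
    · exact key4 u x hut hxu h1u (hyx' ▸ h2y)
    by_cases hyu' : y = u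
    · exact key1 u hut (hyu' ▸ h2y)
    · exfalso
      have := add3_le_distSize D1 (Ne.symm hxu') (Ne.symm hyu') (Ne.symm hyx')
      omega

lemma rcond_of_reachable {D : V → ℕ} {t : V} (hsize : distSize D ≤ 4)
    (h : KReachable G D 1 t) : RCond G D t := by
  obtain ⟨D', hreach, ht⟩ := h
  have main : ∀ E : V → ℕ, PebblingReaches G E D' → distSize E ≤ 4 → RCond G E t := by
    intro E hE
    induction hE using Relation.ReflTransGen.head_induction_on with
    | refl => intro _; exact Or.inl ht
    | head hstep htail ih =>
      intro hsz
      have := distSize_step G hstep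
      exact rcond_step G hsz hstep (ih (by omega))
  exact main D hreach hsize

-- forward reachability helpers
lemma reach_self {D : V → ℕ} {t : V} (h : 1 ≤ D t) : KReachable G D 1 t :=
  ⟨D, Relation.ReflTransGen.refl, h⟩

lemma reach_adj {D : V → ℕ} {a t : V} (h2 : 2 ≤ D a) (hadj : G.Adj a t) :
    KReachable G D 1 t := by
  refine ⟨Function.update (Function.update D a (D a - 2)) t (D t + 1),
    Relation.ReflTransGen.single ⟨a, t, hadj, h2, rfl⟩, ?_⟩
  simp

lemma reach_two {D : V → ℕ} {a b t : V} (h4 : 4 ≤ D a) (h1 : G.Adj a b) (h2 : G.Adj b t) :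
    KReachable G D 1 t := by
  have hne : a ≠ b := h1.ne
  set E1 := Function.update (Function.update D a (D a - 2)) b (D b + 1) with hE1
  have s1 : PebblingStep G D E1 := ⟨a, b, h1, by omega, rfl⟩
  have hE1a : E1 a = D a - 2 := by rw [hE1, Function.update_of_ne hne, Function.update_self]
  set E2 := Function.update (Function.update E1 a (E1 a - 2)) b (E1 b + 1) with hE2
  have s2 : PebblingStep G E1 E2 := ⟨a, b, h1, by omega, rfl⟩
  have hE2b : E2 b = D b + 2 := by
    rw [hE2, Function.update_self, hE1, Function.update_self]
  obtain ⟨D', hreach, ht⟩ := reach_adj G (D := E2) (a := b) (t := t) (by omega) h2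
  exact ⟨D', Relation.ReflTransGen.head s1 (Relation.ReflTransGen.head s2 hreach), ht⟩

lemma notR_all_one {D : V → ℕ} {t : V} (hP : ∀ v, D v ≤ 1) (ht : D t = 0) :
    ¬ RCond G D t := by
  rintro (h | ⟨u, hut, htwo⟩)
  · omega
  rcases htwo with h | ⟨x, _, h4⟩ | ⟨x, y, _, _, _, h2x, _⟩ | ⟨_, x, _, h2x⟩ |
    ⟨_, x, _, _, y, _, h2y⟩
  · have := hP u; omega
  · have := hP x; omega
  · have := hP x; omega
  · have := hP x; omega
  · have := hP y; omega

lemma notR_two_piles {D : V → ℕ} {a b t : V}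
    (hcap : ∀ v, D v ≤ 2) (hsupp : ∀ z, 1 ≤ D z → z = a ∨ z = b)
    (hta : t ≠ a) (htb : t ≠ b) (hat : ¬ G.Adj a t) (hbt : ¬ G.Adj b t)
    (hcom : ∀ u, G.Adj u t → ¬(G.Adj a u ∧ G.Adj b u)) : ¬ RCond G D t := by
  rintro (h | ⟨u, hut, htwo⟩)
  · rcases hsupp t h with rfl | rfl
    · exact hta rfl
    · exact htb rfl
  have hu_notp : 1 ≤ D u → False := by
    intro h1
    rcases hsupp u h1 with rfl | rfl
    · exact hat hut
    · exact hbt hut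
  rcases htwo with h | ⟨x, _, h4⟩ | ⟨x, y, hxy, hxu, hyu, h2x, h2y⟩ | ⟨h1u, _⟩ |
    ⟨h1u, _⟩
  · exact hu_notp (by omega)
  · have := hcap x; omega
  · rcases hsupp x (by omega) with rfl | rfl <;> rcases hsupp y (by omega) with rfl | rfl
    · exact hxy rfl
    · exact hcom u hut ⟨hxu, hyu⟩
    · exact hcom u hut ⟨hyu, hxu⟩
    · exact hxy rfl
  · exact hu_notp h1u
  · exact hu_notp h1u

lemma notR_one_pile {D : V → ℕ} {a c d t : V}
    (hcap : ∀ v, D v ≤ 2) (h2p : ∀ z, 2 ≤ D z → z = a)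
    (hsupp : ∀ z, 1 ≤ D z → z = a ∨ z = c ∨ z = d)
    (hta : t ≠ a) (htc : t ≠ c) (htd : t ≠ d)
    (hat : ¬ G.Adj a t)
    (hc : G.Adj c t → ¬(G.Adj a c ∨ (G.Adj d c ∧ G.Adj a d)))
    (hd : G.Adj d t → ¬(G.Adj a d ∨ (G.Adj c d ∧ G.Adj a c))) : ¬ RCond G D t := by
  rintro (h | ⟨u, hut, htwo⟩)
  · rcases hsupp t h with rfl | rfl | rfl
    · exact hta rfl
    · exact htc rfl
    · exact htd rfl
  rcases htwo with h | ⟨x, _, h4⟩ | ⟨x, y, hxy, hxu, hyu, h2x, h2y⟩ | ⟨h1u, x, hxu, h2x⟩ |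
    ⟨h1u, x, hxu, h1x, y, hyx, h2y⟩
  · have := h2p u (by omega); subst this; exact hat hut
  · have := hcap x; omega
  · have hx := h2p x (by omega); have hy := h2p y (by omega)
    exact hxy (hx.trans hy.symm)
  · have hx := h2p x h2x
    rw [hx] at hxu
    rcases hsupp u (by omega) with h' | h' | h' <;> rw [h'] at hxu hut
    · exact (G.loopless.irrefl a) hxu
    · exact hc hut (Or.inl hxu)
    · exact hd hut (Or.inl hxu)
  · have hy := h2p y (by omega)
    rw [hy] at hyx
    rcases hsupp x (by omega) with h' | h' | h' <;> rw [h'] at hyx hxu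
    · exact (G.loopless.irrefl a) hyx
    · rcases hsupp u (by omega) with h'' | h'' | h'' <;> rw [h''] at hxu hut
      · exact hat hut
      · exact (G.loopless.irrefl c) hxu
      · exact hd hut (Or.inr ⟨hxu, hyx⟩)
    · rcases hsupp u (by omega) with h'' | h'' | h'' <;> rw [h''] at hxu hut
      · exact hat hut
      · exact hc hut (Or.inr ⟨hxu, hyx⟩)
      · exact (G.loopless.irrefl d) hxu

end Generic


section HmBasics
variable {m : ℕ}

abbrev uu (i : Fin m) : Fin m ⊕ (Fin m ⊕ Unit) := Sum.inl i
abbrev vv (i : Fin m) : Fin m ⊕ (Fin m ⊕ Unit) := Sum.inr (Sum.inl i)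

lemma adj_uu {i j : Fin m} : (Hm m).Adj (uu i) (uu j) ↔ i.val / 2 ≠ j.val / 2 := by
  simp only [Hm, SimpleGraph.fromRel_adj, HmRel, ne_eq, Sum.inl.injEq, Fin.ext_iff]
  omega

lemma adj_vv {i j : Fin m} : (Hm m).Adj (vv i) (vv j) ↔ i.val / 2 ≠ j.val / 2 := by
  simp only [Hm, SimpleGraph.fromRel_adj, HmRel, ne_eq, Sum.inr.injEq, Sum.inl.injEq,
    Fin.ext_iff]
  omega

lemma adj_uv {i j : Fin m} :
    (Hm m).Adj (uu i) (vv j) ↔ i.val = j.val ∧ i.val % 2 = 1 := by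
  simp [Hm, SimpleGraph.fromRel_adj, HmRel, Fin.ext_iff]

lemma adj_vu {i j : Fin m} :
    (Hm m).Adj (vv i) (uu j) ↔ i.val = j.val ∧ i.val % 2 = 1 := by
  rw [SimpleGraph.adj_comm, adj_uv]; omega

lemma adj_uw {i : Fin m} : (Hm m).Adj (uu i) (hmW m) ↔ i.val % 2 = 0 := by
  simp [Hm, hmW, SimpleGraph.fromRel_adj, HmRel]

lemma adj_wu {i : Fin m} : (Hm m).Adj (hmW m) (uu i) ↔ i.val % 2 = 0 := by
  rw [SimpleGraph.adj_comm, adj_uw]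

lemma adj_vw {i : Fin m} : (Hm m).Adj (vv i) (hmW m) ↔ i.val % 2 = 0 := by
  simp [Hm, hmW, SimpleGraph.fromRel_adj, HmRel]

lemma adj_wv {i : Fin m} : (Hm m).Adj (hmW m) (vv i) ↔ i.val % 2 = 0 := by
  rw [SimpleGraph.adj_comm, adj_vw]

lemma not_adj_ww : ¬ (Hm m).Adj (hmW m) (hmW m) := (Hm m).loopless.irrefl _

/-- the side-swapping automorphism -/
def swapUV : (Fin m ⊕ (Fin m ⊕ Unit)) ≃ (Fin m ⊕ (Fin m ⊕ Unit)) where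
  toFun x := match x with
    | .inl i => .inr (.inl i)
    | .inr (.inl i) => .inl i
    | .inr (.inr u) => .inr (.inr u)
  invFun x := match x with
    | .inl i => .inr (.inl i)
    | .inr (.inl i) => .inl i
    | .inr (.inr u) => .inr (.inr u)
  left_inv x := by rcases x with i | i | u <;> rfl
  right_inv x := by rcases x with i | i | u <;> rfl

lemma swap_adj (x y : Fin m ⊕ (Fin m ⊕ Unit)) :
    (Hm m).Adj (swapUV x) (swapUV y) ↔ (Hm m).Adj x y := by
  rcases x with i | i | u <;> rcases y with j | j | u' <;>
    simp [Hm, SimpleGraph.fromRel_adj, HmRel, swapUV, Fin.ext_iff] <;>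
    omega


lemma swap_swap (x : Fin m ⊕ (Fin m ⊕ Unit)) : swapUV (swapUV x) = x := by
  rcases x with i | i | u <;> rfl

lemma swap_ne {x y : Fin m ⊕ (Fin m ⊕ Unit)} (h : x ≠ y) : swapUV x ≠ swapUV y :=
  fun hh => h (swapUV.injective hh)

lemma pick_ne (e1 e2 e3 : ℕ) : ∃ l : ℕ, l < 4 ∧ l ≠ e1 ∧ l ≠ e2 ∧ l ≠ e3 := by
  by_cases h0 : e1 ≠ 0 ∧ e2 ≠ 0 ∧ e3 ≠ 0
  · obtain ⟨a, b, c⟩ := h0; exact ⟨0, by omega, by omega, by omega, by omega⟩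
  by_cases h1 : e1 ≠ 1 ∧ e2 ≠ 1 ∧ e3 ≠ 1
  · obtain ⟨a, b, c⟩ := h1; exact ⟨1, by omega, by omega, by omega, by omega⟩
  by_cases h2 : e1 ≠ 2 ∧ e2 ≠ 2 ∧ e3 ≠ 2
  · obtain ⟨a, b, c⟩ := h2; exact ⟨2, by omega, by omega, by omega, by omega⟩
  · push_neg at h0 h1 h2
    refine ⟨3, by omega, by omega, by omega, by omega⟩

lemma pick_odd (e1 e2 : ℕ) (h : e1 % 2 = 0 ∨ e2 % 2 = 0) :
    ∃ q : ℕ, q < 4 ∧ q % 2 = 1 ∧ q ≠ e1 ∧ q ≠ e2 := by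
  by_cases h1 : e1 = 1 ∨ e2 = 1
  · exact ⟨3, by omega, by omega, by omega, by omega⟩
  · exact ⟨1, by omega, by omega, by omega, by omega⟩

lemma mate_ex (he : m % 2 = 0) (i : Fin m) :
    ∃ k : Fin m, (i.val % 2 = 0 ∧ k.val = i.val + 1) ∨ (i.val % 2 = 1 ∧ k.val + 1 = i.val) := by
  have him := i.isLt
  by_cases h : i.val % 2 = 0
  · exact ⟨⟨i.val + 1, by omega⟩, Or.inl ⟨h, rfl⟩⟩
  · refine ⟨⟨i.val - 1, by omega⟩, Or.inr ⟨by omega, ?_⟩⟩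
    show i.val - 1 + 1 = i.val
    omega

/-- target package for the two-piles case -/
def E2P (m : ℕ) (a b t : Fin m ⊕ (Fin m ⊕ Unit)) : Prop :=
  t ≠ a ∧ t ≠ b ∧ ¬(Hm m).Adj a t ∧ ¬(Hm m).Adj b t ∧
    ∀ u, (Hm m).Adj u t → ¬((Hm m).Adj a u ∧ (Hm m).Adj b u)

/-- target package for the one-pile case -/
def E1P (m : ℕ) (a c d t : Fin m ⊕ (Fin m ⊕ Unit)) : Prop :=
  t ≠ a ∧ t ≠ c ∧ t ≠ d ∧ ¬(Hm m).Adj a t ∧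
    ((Hm m).Adj c t → ¬((Hm m).Adj a c ∨ ((Hm m).Adj d c ∧ (Hm m).Adj a d))) ∧
    ((Hm m).Adj d t → ¬((Hm m).Adj a d ∨ ((Hm m).Adj c d ∧ (Hm m).Adj a c)))

lemma E2P_swap {a b t : Fin m ⊕ (Fin m ⊕ Unit)} (h : E2P m a b t) : E2P m b a t := by
  obtain ⟨h1, h2, h3, h4, h5⟩ := h
  exact ⟨h2, h1, h4, h3, fun u hu hh => h5 u hu ⟨hh.2, hh.1⟩⟩

lemma E1P_swapcd {a c d t : Fin m ⊕ (Fin m ⊕ Unit)} (h : E1P m a d c t) : E1P m a c d t := by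
  obtain ⟨h1, h2, h3, h4, h5, h6⟩ := h
  exact ⟨h1, h3, h2, h4, h6, h5⟩

lemma E2P_sigma {a b t : Fin m ⊕ (Fin m ⊕ Unit)} (h : E2P m a b t) :
    E2P m (swapUV a) (swapUV b) (swapUV t) := by
  obtain ⟨h1, h2, h3, h4, h5⟩ := h
  refine ⟨swap_ne h1, swap_ne h2, by rwa [swap_adj], by rwa [swap_adj], ?_⟩
  intro u hu hh
  have hu' : (Hm m).Adj (swapUV u) t := by
    have h' := (swap_adj u (swapUV t)).mpr hu
    rwa [swap_swap] at h'
  refine h5 (swapUV u) hu' ⟨?_, ?_⟩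
  · have h' := hh.1
    rw [← swap_swap u] at h'
    exact (swap_adj a (swapUV u)).mp h'
  · have h' := hh.2
    rw [← swap_swap u] at h'
    exact (swap_adj b (swapUV u)).mp h'

lemma E1P_sigma {a c d t : Fin m ⊕ (Fin m ⊕ Unit)} (h : E1P m a c d t) :
    E1P m (swapUV a) (swapUV c) (swapUV d) (swapUV t) := by
  obtain ⟨h1, h2, h3, h4, h5, h6⟩ := h
  refine ⟨swap_ne h1, swap_ne h2, swap_ne h3, by rwa [swap_adj], ?_, ?_⟩
  · intro hct hcon
    rw [swap_adj] at hct
    simp only [swap_adj] at hcon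
    exact h5 hct hcon
  · intro hdt hcon
    rw [swap_adj] at hdt
    simp only [swap_adj] at hcon
    exact h6 hdt hcon

section Etargets
variable (hm : 4 ≤ m) (he : m % 2 = 0)
include hm he

lemma E2uu (i j : Fin m) (hij : i ≠ j) : ∃ t, E2P m (uu i) (uu j) t := by
  have him := i.isLt; have hjm := j.isLt
  have hij' : i.val ≠ j.val := fun h => hij (Fin.ext h)
  obtain ⟨k, hk⟩ := mate_ex he i
  have hkm := k.isLt
  by_cases hsp : j.val = k.val ∧ k.val % 2 = 1
  · refine ⟨vv i, by simp, by simp, ?_, ?_, ?_⟩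
    · simp [Hm, SimpleGraph.fromRel_adj, HmRel, Fin.ext_iff]; omega
    · simp [Hm, SimpleGraph.fromRel_adj, HmRel, Fin.ext_iff]; omega
    · rintro (l | l | u') hu hh
      · have := l.isLt
        simp [Hm, SimpleGraph.fromRel_adj, HmRel, Fin.ext_iff] at hu hh; omega
      · have := l.isLt
        simp [Hm, SimpleGraph.fromRel_adj, HmRel, Fin.ext_iff] at hu hh; omega
      · simp [Hm, SimpleGraph.fromRel_adj, HmRel, Fin.ext_iff] at hu hh; omega
  · refine ⟨vv k, by simp, by simp, ?_, ?_, ?_⟩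
    · simp [Hm, SimpleGraph.fromRel_adj, HmRel, Fin.ext_iff]; omega
    · simp [Hm, SimpleGraph.fromRel_adj, HmRel, Fin.ext_iff]; omega
    · rintro (l | l | u') hu hh
      · have := l.isLt
        simp [Hm, SimpleGraph.fromRel_adj, HmRel, Fin.ext_iff] at hu hh; omega
      · have := l.isLt
        simp [Hm, SimpleGraph.fromRel_adj, HmRel, Fin.ext_iff] at hu hh; omega
      · simp [Hm, SimpleGraph.fromRel_adj, HmRel, Fin.ext_iff] at hu hh; omega

set_option maxHeartbeats 1000000 in
lemma E2uv (i j : Fin m) : ∃ t, E2P m (uu i) (vv j) t := by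
  have him := i.isLt; have hjm := j.isLt
  obtain ⟨k, hk⟩ := mate_ex he i
  obtain ⟨k', hk'⟩ := mate_ex he j
  have hkm := k.isLt; have hk'm := k'.isLt
  by_cases hpair : j.val / 2 = i.val / 2
  · by_cases hji : j.val = i.val
    · refine ⟨vv k, by simp, ?_, ?_, ?_, ?_⟩
      · simp [Fin.ext_iff]; omega
      · simp [Hm, SimpleGraph.fromRel_adj, HmRel, Fin.ext_iff]; omega
      · simp [Hm, SimpleGraph.fromRel_adj, HmRel, Fin.ext_iff]; omega
      · rintro (l | l | u') hu hh
        · have := l.isLt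
          simp [Hm, SimpleGraph.fromRel_adj, HmRel, Fin.ext_iff] at hu hh <;> omega
        · have := l.isLt
          simp [Hm, SimpleGraph.fromRel_adj, HmRel, Fin.ext_iff] at hu hh <;> omega
        · simp [Hm, SimpleGraph.fromRel_adj, HmRel, Fin.ext_iff] at hu hh <;> omega
    · by_cases hio : i.val % 2 = 1
      · refine ⟨uu k, ?_, by simp, ?_, ?_, ?_⟩
        · simp [Fin.ext_iff]; omega
        · simp [Hm, SimpleGraph.fromRel_adj, HmRel, Fin.ext_iff]; omega
        · simp [Hm, SimpleGraph.fromRel_adj, HmRel, Fin.ext_iff]; omega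
        · rintro (l | l | u') hu hh
          · have := l.isLt
            simp [Hm, SimpleGraph.fromRel_adj, HmRel, Fin.ext_iff] at hu hh <;> omega
          · have := l.isLt
            simp [Hm, SimpleGraph.fromRel_adj, HmRel, Fin.ext_iff] at hu hh <;> omega
          · simp [Hm, SimpleGraph.fromRel_adj, HmRel, Fin.ext_iff] at hu hh <;> omega
      · refine ⟨vv i, by simp, ?_, ?_, ?_, ?_⟩
        · simp [Fin.ext_iff]; omega
        · simp [Hm, SimpleGraph.fromRel_adj, HmRel, Fin.ext_iff]; omega
        · simp [Hm, SimpleGraph.fromRel_adj, HmRel, Fin.ext_iff]; omega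
        · rintro (l | l | u') hu hh
          · have := l.isLt
            simp [Hm, SimpleGraph.fromRel_adj, HmRel, Fin.ext_iff] at hu hh <;> omega
          · have := l.isLt
            simp [Hm, SimpleGraph.fromRel_adj, HmRel, Fin.ext_iff] at hu hh <;> omega
          · simp [Hm, SimpleGraph.fromRel_adj, HmRel, Fin.ext_iff] at hu hh <;> omega
  · by_cases hio : i.val % 2 = 1
    · by_cases hjo : j.val % 2 = 1
      · refine ⟨hmW m, by simp [hmW], by simp [hmW], ?_, ?_, ?_⟩
        · simp [Hm, hmW, SimpleGraph.fromRel_adj, HmRel, Fin.ext_iff]; omega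
        · simp [Hm, hmW, SimpleGraph.fromRel_adj, HmRel, Fin.ext_iff]; omega
        · rintro (l | l | u') hu hh
          · have := l.isLt
            simp [Hm, hmW, SimpleGraph.fromRel_adj, HmRel, Fin.ext_iff] at hu hh <;> omega
          · have := l.isLt
            simp [Hm, hmW, SimpleGraph.fromRel_adj, HmRel, Fin.ext_iff] at hu hh <;> omega
          · simp [Hm, hmW, SimpleGraph.fromRel_adj, HmRel, Fin.ext_iff] at hu hh <;> omega
      · refine ⟨uu k, ?_, by simp, ?_, ?_, ?_⟩
        · simp [Fin.ext_iff]; omega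
        · simp [Hm, SimpleGraph.fromRel_adj, HmRel, Fin.ext_iff]; omega
        · simp [Hm, SimpleGraph.fromRel_adj, HmRel, Fin.ext_iff]; omega
        · rintro (l | l | u') hu hh
          · have := l.isLt
            simp [Hm, SimpleGraph.fromRel_adj, HmRel, Fin.ext_iff] at hu hh <;> omega
          · have := l.isLt
            simp [Hm, SimpleGraph.fromRel_adj, HmRel, Fin.ext_iff] at hu hh <;> omega
          · simp [Hm, SimpleGraph.fromRel_adj, HmRel, Fin.ext_iff] at hu hh <;> omega
    · refine ⟨vv k', by simp, ?_, ?_, ?_, ?_⟩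
      · simp [Fin.ext_iff]; omega
      · simp [Hm, SimpleGraph.fromRel_adj, HmRel, Fin.ext_iff]; omega
      · simp [Hm, SimpleGraph.fromRel_adj, HmRel, Fin.ext_iff]; omega
      · rintro (l | l | u') hu hh
        · have := l.isLt
          simp [Hm, SimpleGraph.fromRel_adj, HmRel, Fin.ext_iff] at hu hh <;> omega
        · have := l.isLt
          simp [Hm, SimpleGraph.fromRel_adj, HmRel, Fin.ext_iff] at hu hh <;> omega
        · simp [Hm, SimpleGraph.fromRel_adj, HmRel, Fin.ext_iff] at hu hh <;> omega

set_option maxHeartbeats 1000000 in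
lemma E2uw (i : Fin m) : ∃ t, E2P m (uu i) (hmW m) t := by
  have him := i.isLt
  obtain ⟨k, hk⟩ := mate_ex he i
  have hkm := k.isLt
  by_cases hio : i.val % 2 = 0
  · refine ⟨vv k, by simp, by simp [hmW], ?_, ?_, ?_⟩
    · simp [Hm, SimpleGraph.fromRel_adj, HmRel, Fin.ext_iff]; omega
    · simp [Hm, hmW, SimpleGraph.fromRel_adj, HmRel, Fin.ext_iff]; omega
    · rintro (l | l | u') hu hh
      · have := l.isLt
        simp [Hm, hmW, SimpleGraph.fromRel_adj, HmRel, Fin.ext_iff] at hu hh <;> omega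
      · have := l.isLt
        simp [Hm, hmW, SimpleGraph.fromRel_adj, HmRel, Fin.ext_iff] at hu hh <;> omega
      · simp [Hm, hmW, SimpleGraph.fromRel_adj, HmRel, Fin.ext_iff] at hu hh <;> omega
  · have h4 : (3 : ℕ) < m := by omega
    refine ⟨vv (if i.val / 2 = 0 then ⟨3, by omega⟩ else ⟨1, by omega⟩), by simp, by simp [hmW],
      ?_, ?_, ?_⟩ <;> by_cases hc : i.val / 2 = 0 <;> simp only [hc, if_true, if_false, reduceIte]
    · simp [Hm, SimpleGraph.fromRel_adj, HmRel, Fin.ext_iff]; omega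
    · simp [Hm, SimpleGraph.fromRel_adj, HmRel, Fin.ext_iff]; omega
    · simp [Hm, hmW, SimpleGraph.fromRel_adj, HmRel, Fin.ext_iff] <;> omega
    · simp [Hm, hmW, SimpleGraph.fromRel_adj, HmRel, Fin.ext_iff] <;> omega
    · rintro (l | l | u') hu hh
      · have := l.isLt
        simp [Hm, hmW, SimpleGraph.fromRel_adj, HmRel, Fin.ext_iff] at hu hh <;> omega
      · have := l.isLt
        simp [Hm, hmW, SimpleGraph.fromRel_adj, HmRel, Fin.ext_iff] at hu hh <;> omega
      · simp [Hm, hmW, SimpleGraph.fromRel_adj, HmRel, Fin.ext_iff] at hu hh <;> omega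
    · rintro (l | l | u') hu hh
      · have := l.isLt
        simp [Hm, hmW, SimpleGraph.fromRel_adj, HmRel, Fin.ext_iff] at hu hh <;> omega
      · have := l.isLt
        simp [Hm, hmW, SimpleGraph.fromRel_adj, HmRel, Fin.ext_iff] at hu hh <;> omega
      · simp [Hm, hmW, SimpleGraph.fromRel_adj, HmRel, Fin.ext_iff] at hu hh <;> omega

lemma E2vv (i j : Fin m) (hij : i ≠ j) : ∃ t, E2P m (vv i) (vv j) t := by
  obtain ⟨t, ht⟩ := E2uu hm he i j hij
  exact ⟨swapUV t, E2P_sigma ht⟩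

lemma E2vw (i : Fin m) : ∃ t, E2P m (vv i) (hmW m) t := by
  obtain ⟨t, ht⟩ := E2uw hm he i
  have h := E2P_sigma ht
  rw [show swapUV (hmW m) = hmW m from rfl] at h
  exact ⟨swapUV t, h⟩

lemma E2vu (i j : Fin m) : ∃ t, E2P m (vv i) (uu j) t := by
  obtain ⟨t, ht⟩ := E2uv hm he j i
  exact ⟨t, E2P_swap ht⟩

lemma E2wu (i : Fin m) : ∃ t, E2P m (hmW m) (uu i) t := by
  obtain ⟨t, ht⟩ := E2uw hm he i
  exact ⟨t, E2P_swap ht⟩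

lemma E2wv (i : Fin m) : ∃ t, E2P m (hmW m) (vv i) t := by
  obtain ⟨t, ht⟩ := E2vw hm he i
  exact ⟨t, E2P_swap ht⟩

set_option maxHeartbeats 1000000 in
lemma e1uUU (i j l : Fin m) : ∃ t, E1P m (uu i) (uu j) (uu l) t := by
  have him := i.isLt; have hjm := j.isLt; have hlm := l.isLt
  obtain ⟨p, hp0, hp1, hp2, hp3⟩ := pick_ne i.val j.val l.val
  refine ⟨vv ⟨p, by omega⟩, by simp, by simp, by simp, ?_, ?_, ?_⟩
  · simp [Hm, hmW, SimpleGraph.fromRel_adj, HmRel, Fin.ext_iff]; omega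
  · intro h hcon; simp [Hm, hmW, SimpleGraph.fromRel_adj, HmRel, Fin.ext_iff] at h hcon <;> omega
  · intro h hcon; simp [Hm, hmW, SimpleGraph.fromRel_adj, HmRel, Fin.ext_iff] at h hcon <;> omega

set_option maxHeartbeats 1000000 in
lemma e1uUV (i j l : Fin m) : ∃ t, E1P m (uu i) (uu j) (vv l) t := by
  have him := i.isLt; have hjm := j.isLt; have hlm := l.isLt
  by_cases hB1 : l.val = i.val ∧ i.val % 2 = 1
  · obtain ⟨k, hk⟩ := mate_ex he i
    have hkm := k.isLt
    refine ⟨vv k, by simp, by simp, ?_, ?_, ?_, ?_⟩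
    · simp [Fin.ext_iff]; omega
    · simp [Hm, hmW, SimpleGraph.fromRel_adj, HmRel, Fin.ext_iff]; omega
    · intro h hcon; simp [Hm, hmW, SimpleGraph.fromRel_adj, HmRel, Fin.ext_iff] at h hcon <;> omega
    · intro h hcon; simp [Hm, hmW, SimpleGraph.fromRel_adj, HmRel, Fin.ext_iff] at h hcon <;> omega
  by_cases hB2 : l.val = j.val ∧ l.val % 2 = 1 ∧ l.val / 2 ≠ i.val / 2
  · obtain ⟨k', hk'⟩ := mate_ex he l
    have hk'm := k'.isLt
    refine ⟨vv k', by simp, by simp, ?_, ?_, ?_, ?_⟩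
    · simp [Fin.ext_iff]; omega
    · simp [Hm, hmW, SimpleGraph.fromRel_adj, HmRel, Fin.ext_iff]; omega
    · intro h hcon; simp [Hm, hmW, SimpleGraph.fromRel_adj, HmRel, Fin.ext_iff] at h hcon <;> omega
    · intro h hcon; simp [Hm, hmW, SimpleGraph.fromRel_adj, HmRel, Fin.ext_iff] at h hcon <;> omega
  · obtain ⟨p, hp0, hp1, hp2, hp3⟩ := pick_ne i.val j.val l.val
    refine ⟨vv ⟨p, by omega⟩, by simp, by simp, ?_, ?_, ?_, ?_⟩
    · simp [Fin.ext_iff]; omega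
    · simp [Hm, hmW, SimpleGraph.fromRel_adj, HmRel, Fin.ext_iff]; omega
    · intro h hcon; simp [Hm, hmW, SimpleGraph.fromRel_adj, HmRel, Fin.ext_iff] at h hcon <;> omega
    · intro h hcon; simp [Hm, hmW, SimpleGraph.fromRel_adj, HmRel, Fin.ext_iff] at h hcon <;> omega

set_option maxHeartbeats 1000000 in
lemma e1uUW (i j : Fin m) : ∃ t, E1P m (uu i) (uu j) (hmW m) t := by
  have him := i.isLt; have hjm := j.isLt
  by_cases hB : i.val % 2 = 1 ∧ (j.val % 2 = 1 ∨ i.val / 2 = j.val / 2)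
  · obtain ⟨p, hp0, hp1, hp2, hp3⟩ := pick_ne i.val j.val j.val
    refine ⟨vv ⟨p, by omega⟩, by simp, by simp, by simp [hmW], ?_, ?_, ?_⟩
    · simp [Hm, hmW, SimpleGraph.fromRel_adj, HmRel, Fin.ext_iff]; omega
    · intro h hcon; simp [Hm, hmW, SimpleGraph.fromRel_adj, HmRel, Fin.ext_iff] at h hcon <;> omega
    · intro h hcon; simp [Hm, hmW, SimpleGraph.fromRel_adj, HmRel, Fin.ext_iff] at h hcon <;> omega
  · obtain ⟨q, hq0, hq1, hq2, hq3⟩ := pick_odd i.val j.val (by omega)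
    refine ⟨vv ⟨q, by omega⟩, by simp, by simp, by simp [hmW], ?_, ?_, ?_⟩
    · simp [Hm, hmW, SimpleGraph.fromRel_adj, HmRel, Fin.ext_iff]; omega
    · intro h hcon; simp [Hm, hmW, SimpleGraph.fromRel_adj, HmRel, Fin.ext_iff] at h hcon <;> omega
    · intro h hcon; simp [Hm, hmW, SimpleGraph.fromRel_adj, HmRel, Fin.ext_iff] at h hcon <;> omega

set_option maxHeartbeats 1000000 in
lemma e1uVV (i j l : Fin m) : ∃ t, E1P m (uu i) (vv j) (vv l) t := by
  have him := i.isLt; have hjm := j.isLt; have hlm := l.isLt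
  obtain ⟨k, hk⟩ := mate_ex he i
  have hkm := k.isLt
  refine ⟨uu k, ?_, by simp, by simp, ?_, ?_, ?_⟩
  · simp [Fin.ext_iff]; omega
  · simp [Hm, hmW, SimpleGraph.fromRel_adj, HmRel, Fin.ext_iff]; omega
  · intro h hcon; simp [Hm, hmW, SimpleGraph.fromRel_adj, HmRel, Fin.ext_iff] at h hcon <;> omega
  · intro h hcon; simp [Hm, hmW, SimpleGraph.fromRel_adj, HmRel, Fin.ext_iff] at h hcon <;> omega

set_option maxHeartbeats 1000000 in
lemma e1uVW (i j : Fin m) : ∃ t, E1P m (uu i) (vv j) (hmW m) t := by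
  have him := i.isLt; have hjm := j.isLt
  by_cases hio : i.val % 2 = 1
  · obtain ⟨k, hk⟩ := mate_ex he i
    have hkm := k.isLt
    refine ⟨uu k, ?_, by simp, by simp [hmW], ?_, ?_, ?_⟩
    · simp [Fin.ext_iff]; omega
    · simp [Hm, hmW, SimpleGraph.fromRel_adj, HmRel, Fin.ext_iff]; omega
    · intro h hcon; simp [Hm, hmW, SimpleGraph.fromRel_adj, HmRel, Fin.ext_iff] at h hcon <;> omega
    · intro h hcon; simp [Hm, hmW, SimpleGraph.fromRel_adj, HmRel, Fin.ext_iff] at h hcon <;> omega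
  · by_cases hjo : j.val % 2 = 0
    · obtain ⟨k', hk'⟩ := mate_ex he j
      have hk'm := k'.isLt
      refine ⟨vv k', by simp, ?_, by simp [hmW], ?_, ?_, ?_⟩
      · simp [Fin.ext_iff]; omega
      · simp [Hm, hmW, SimpleGraph.fromRel_adj, HmRel, Fin.ext_iff]; omega
      · intro h hcon; simp [Hm, hmW, SimpleGraph.fromRel_adj, HmRel, Fin.ext_iff] at h hcon <;> omega
      · intro h hcon; simp [Hm, hmW, SimpleGraph.fromRel_adj, HmRel, Fin.ext_iff] at h hcon <;> omega
    · obtain ⟨q, hq0, hq1, hq2, hq3⟩ := pick_odd j.val 0 (Or.inr rfl)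
      refine ⟨vv ⟨q, by omega⟩, by simp, ?_, by simp [hmW], ?_, ?_, ?_⟩
      · simp [Fin.ext_iff]; omega
      · simp [Hm, hmW, SimpleGraph.fromRel_adj, HmRel, Fin.ext_iff]; omega
      · intro h hcon; simp [Hm, hmW, SimpleGraph.fromRel_adj, HmRel, Fin.ext_iff] at h hcon <;> omega
      · intro h hcon; simp [Hm, hmW, SimpleGraph.fromRel_adj, HmRel, Fin.ext_iff] at h hcon <;> omega

set_option maxHeartbeats 1000000 in
lemma e1uWW (i : Fin m) : ∃ t, E1P m (uu i) (hmW m) (hmW m) t := by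
  have him := i.isLt
  by_cases hio : i.val % 2 = 1
  · obtain ⟨k, hk⟩ := mate_ex he i
    have hkm := k.isLt
    refine ⟨vv k, by simp, by simp [hmW], by simp [hmW], ?_, ?_, ?_⟩
    · simp [Hm, hmW, SimpleGraph.fromRel_adj, HmRel, Fin.ext_iff]; omega
    · intro h hcon; simp [Hm, hmW, SimpleGraph.fromRel_adj, HmRel, Fin.ext_iff] at h hcon <;> omega
    · intro h hcon; simp [Hm, hmW, SimpleGraph.fromRel_adj, HmRel, Fin.ext_iff] at h hcon <;> omega
  · refine ⟨vv ⟨1, by omega⟩, by simp, by simp [hmW], by simp [hmW], ?_, ?_, ?_⟩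
    · simp [Hm, hmW, SimpleGraph.fromRel_adj, HmRel, Fin.ext_iff]; omega
    · intro h hcon; simp [Hm, hmW, SimpleGraph.fromRel_adj, HmRel, Fin.ext_iff] at h hcon <;> omega
    · intro h hcon; simp [Hm, hmW, SimpleGraph.fromRel_adj, HmRel, Fin.ext_iff] at h hcon <;> omega

set_option maxHeartbeats 1000000 in
lemma E1u (i : Fin m) (c d : Fin m ⊕ (Fin m ⊕ Unit)) : ∃ t, E1P m (uu i) c d t := by
  rcases c with j | j | ⟨⟩ <;> rcases d with l | l | ⟨⟩
  · exact e1uUU hm he i j l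
  · exact e1uUV hm he i j l
  · exact e1uUW hm he i j
  · obtain ⟨t, ht⟩ := e1uUV hm he i l j; exact ⟨t, E1P_swapcd ht⟩
  · exact e1uVV hm he i j l
  · exact e1uVW hm he i j
  · obtain ⟨t, ht⟩ := e1uUW hm he i l; exact ⟨t, E1P_swapcd ht⟩
  · obtain ⟨t, ht⟩ := e1uVW hm he i l; exact ⟨t, E1P_swapcd ht⟩
  · exact e1uWW hm he i

lemma E1v (i : Fin m) (c d : Fin m ⊕ (Fin m ⊕ Unit)) : ∃ t, E1P m (vv i) c d t := by
  obtain ⟨t, ht⟩ := E1u hm he i (swapUV c) (swapUV d)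
  have h := E1P_sigma ht
  rw [swap_swap c, swap_swap d] at h
  exact ⟨swapUV t, h⟩

set_option maxHeartbeats 1000000 in
lemma e1wUU (j l : Fin m) : ∃ t, E1P m (hmW m) (uu j) (uu l) t := by
  have hjm := j.isLt; have hlm := l.isLt
  by_cases hB : j.val % 2 = 1 ∧ l.val % 2 = 1
  · refine ⟨vv ⟨1, by omega⟩, by simp [hmW], by simp, by simp, ?_, ?_, ?_⟩
    · simp [Hm, hmW, SimpleGraph.fromRel_adj, HmRel, Fin.ext_iff] <;> omega
    · intro h hcon; simp [Hm, hmW, SimpleGraph.fromRel_adj, HmRel, Fin.ext_iff] at h hcon <;> omega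
    · intro h hcon; simp [Hm, hmW, SimpleGraph.fromRel_adj, HmRel, Fin.ext_iff] at h hcon <;> omega
  · obtain ⟨q, hq0, hq1, hq2, hq3⟩ := pick_odd j.val l.val (by omega)
    refine ⟨vv ⟨q, by omega⟩, by simp [hmW], by simp, by simp, ?_, ?_, ?_⟩
    · simp [Hm, hmW, SimpleGraph.fromRel_adj, HmRel, Fin.ext_iff]; omega
    · intro h hcon; simp [Hm, hmW, SimpleGraph.fromRel_adj, HmRel, Fin.ext_iff] at h hcon <;> omega
    · intro h hcon; simp [Hm, hmW, SimpleGraph.fromRel_adj, HmRel, Fin.ext_iff] at h hcon <;> omega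

set_option maxHeartbeats 1000000 in
lemma e1wUV (j l : Fin m) : ∃ t, E1P m (hmW m) (uu j) (vv l) t := by
  have hjm := j.isLt; have hlm := l.isLt
  by_cases hlo : l.val % 2 = 0
  · obtain ⟨k', hk'⟩ := mate_ex he l
    have hk'm := k'.isLt
    refine ⟨vv k', by simp [hmW], by simp, ?_, ?_, ?_, ?_⟩
    · simp [Fin.ext_iff]; omega
    · simp [Hm, hmW, SimpleGraph.fromRel_adj, HmRel, Fin.ext_iff]; omega
    · intro h hcon; simp [Hm, hmW, SimpleGraph.fromRel_adj, HmRel, Fin.ext_iff] at h hcon <;> omega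
    · intro h hcon; simp [Hm, hmW, SimpleGraph.fromRel_adj, HmRel, Fin.ext_iff] at h hcon <;> omega
  · obtain ⟨q, hq0, hq1, hq2, hq3⟩ := pick_odd l.val 0 (Or.inr rfl)
    refine ⟨vv ⟨q, by omega⟩, by simp [hmW], by simp, ?_, ?_, ?_, ?_⟩
    · simp [Fin.ext_iff]; omega
    · simp [Hm, hmW, SimpleGraph.fromRel_adj, HmRel, Fin.ext_iff]; omega
    · intro h hcon; simp [Hm, hmW, SimpleGraph.fromRel_adj, HmRel, Fin.ext_iff] at h hcon <;> omega
    · intro h hcon; simp [Hm, hmW, SimpleGraph.fromRel_adj, HmRel, Fin.ext_iff] at h hcon <;> omega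

set_option maxHeartbeats 1000000 in
lemma e1wUW (j : Fin m) : ∃ t, E1P m (hmW m) (uu j) (hmW m) t := by
  have hjm := j.isLt
  refine ⟨vv ⟨1, by omega⟩, by simp [hmW], by simp, by simp [hmW], ?_, ?_, ?_⟩
  · simp [Hm, hmW, SimpleGraph.fromRel_adj, HmRel, Fin.ext_iff] <;> omega
  · intro h hcon; simp [Hm, hmW, SimpleGraph.fromRel_adj, HmRel, Fin.ext_iff] at h hcon <;> omega
  · intro h hcon; simp [Hm, hmW, SimpleGraph.fromRel_adj, HmRel, Fin.ext_iff] at h hcon <;> omega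

set_option maxHeartbeats 1000000 in
lemma e1wWW : ∃ t, E1P m (hmW m) (hmW m) (hmW m) t := by
  refine ⟨vv ⟨1, by omega⟩, by simp [hmW], by simp [hmW], by simp [hmW], ?_, ?_, ?_⟩
  · simp [Hm, hmW, SimpleGraph.fromRel_adj, HmRel, Fin.ext_iff] <;> omega
  · intro h hcon; simp [Hm, hmW, SimpleGraph.fromRel_adj, HmRel, Fin.ext_iff] at h hcon <;> omega
  · intro h hcon; simp [Hm, hmW, SimpleGraph.fromRel_adj, HmRel, Fin.ext_iff] at h hcon <;> omega

lemma E1w (c d : Fin m ⊕ (Fin m ⊕ Unit)) : ∃ t, E1P m (hmW m) c d t := by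
  have sig : ∀ (c' d' : Fin m ⊕ (Fin m ⊕ Unit)), (∃ t, E1P m (hmW m) c' d' t) →
      ∃ t, E1P m (hmW m) (swapUV c') (swapUV d') t := by
    intro c' d' ⟨t, ht⟩
    have h := E1P_sigma ht
    rw [show swapUV (hmW m) = hmW m from rfl] at h
    exact ⟨swapUV t, h⟩
  rcases c with j | j | ⟨⟩ <;> rcases d with l | l | ⟨⟩
  · exact e1wUU hm he j l
  · exact e1wUV hm he j l
  · exact e1wUW hm he j
  · obtain ⟨t, ht⟩ := e1wUV hm he l j; exact ⟨t, E1P_swapcd ht⟩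
  · exact sig (uu j) (uu l) (e1wUU hm he j l)
  · exact sig (uu j) (hmW m) (e1wUW hm he j)
  · obtain ⟨t, ht⟩ := e1wUW hm he l; exact ⟨t, E1P_swapcd ht⟩
  · obtain ⟨t, ht⟩ := sig (uu l) (hmW m) (e1wUW hm he l); exact ⟨t, E1P_swapcd ht⟩
  · exact e1wWW hm he

end Etargets
end HmBasics

section Core
variable {m : ℕ}

lemma exists_bad (hm : 4 ≤ m) (he : m % 2 = 0) (D : Fin m ⊕ (Fin m ⊕ Unit) → ℕ)
    (hcap : ∀ v, D v ≤ 2) (hsize : distSize D ≤ 4) :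
    ∃ t, ¬ RCond (Hm m) D t := by
  by_cases hP : ∃ a, 2 ≤ D a
  · obtain ⟨a, h2a⟩ := hP
    by_cases hb : ∃ b, b ≠ a ∧ 2 ≤ D b
    · obtain ⟨b, hba, h2b⟩ := hb
      have hsupp : ∀ z, 1 ≤ D z → z = a ∨ z = b := by
        intro z hz
        by_contra hcon
        push_neg at hcon
        have := add3_le_distSize D (show a ≠ b from Ne.symm hba) (Ne.symm hcon.1) (Ne.symm hcon.2)
        omega
      have hE : ∃ t, E2P m a b t := by
        rcases a with i | i | ⟨⟩ <;> rcases b with j | j | ⟨⟩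
        · exact E2uu hm he i j (fun h => hba (by rw [h]))
        · exact E2uv hm he i j
        · exact E2uw hm he i
        · exact E2vu hm he i j
        · exact E2vv hm he i j (fun h => hba (by rw [h]))
        · exact E2vw hm he i
        · exact E2wu hm he j
        · exact E2wv hm he j
        · exact absurd rfl hba
      obtain ⟨t, ht1, ht2, ht3, ht4, ht5⟩ := hE
      exact ⟨t, notR_two_piles (Hm m) hcap hsupp ht1 ht2 ht3 ht4 ht5⟩
    · push_neg at hb
      have h2p : ∀ z, 2 ≤ D z → z = a := by
        intro z hz
        by_contra hza
        exact absurd hz (by have := hb z hza; omega)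
      classical
      set Q : Finset (Fin m ⊕ (Fin m ⊕ Unit)) :=
        Finset.univ.filter (fun z => z ≠ a ∧ 1 ≤ D z) with hQ
      have hmemQ : ∀ z, z ∈ Q ↔ (z ≠ a ∧ 1 ≤ D z) := by
        intro z; simp [hQ]
      have hQcard : Q.card ≤ 2 := by
        have h1 : Q.card • 1 ≤ ∑ z ∈ Q, D z :=
          Finset.card_nsmul_le_sum _ _ _ (fun x hx => ((hmemQ x).mp hx).2)
        have ha : a ∉ Q := by simp [hQ]
        have h2 : ∑ z ∈ insert a Q, D z = D a + ∑ z ∈ Q, D z := Finset.sum_insert ha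
        have h3 : ∑ z ∈ insert a Q, D z ≤ distSize D :=
          Finset.sum_le_sum_of_subset (Finset.subset_univ _)
        simp only [smul_eq_mul, mul_one] at h1
        omega
      have hcd : ∃ c d, ∀ z, 1 ≤ D z → z = a ∨ z = c ∨ z = d := by
        by_cases h0 : Q.card = 0
        · refine ⟨a, a, fun z hz => ?_⟩
          by_cases hza : z = a
          · exact Or.inl hza
          · exact absurd (Finset.card_eq_zero.mp h0 ▸ (hmemQ z).mpr ⟨hza, hz⟩)
              (Finset.notMem_empty z)
        by_cases h1 : Q.card = 1
        · obtain ⟨c, hc⟩ := Finset.card_eq_one.mp h1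
          refine ⟨c, c, fun z hz => ?_⟩
          by_cases hza : z = a
          · exact Or.inl hza
          · have := (hmemQ z).mpr ⟨hza, hz⟩
            rw [hc] at this
            simp at this
            exact Or.inr (Or.inl this)
        · obtain ⟨c, d, hne, hcd⟩ := (Finset.card_eq_two (α := Fin m ⊕ (Fin m ⊕ Unit)) (s := Q)).mp (by omega)
          refine ⟨c, d, fun z hz => ?_⟩
          by_cases hza : z = a
          · exact Or.inl hza
          · have := (hmemQ z).mpr ⟨hza, hz⟩
            rw [hcd] at this
            simp at this
            exact Or.inr this
      obtain ⟨c, d, hsupp⟩ := hcd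
      have hE : ∃ t, E1P m a c d t := by
        rcases a with i | i | ⟨⟩
        · exact E1u hm he i c d
        · exact E1v hm he i c d
        · exact E1w hm he c d
      obtain ⟨t, ht1, ht2, ht3, ht4, ht5, ht6⟩ := hE
      exact ⟨t, notR_one_pile (Hm m) hcap h2p hsupp ht1 ht2 ht3 ht4 ht5 ht6⟩
  · push_neg at hP
    have hone : ∀ v, D v ≤ 1 := fun v => by have := hP v; omega
    have hb0 : (0 : ℕ) < m := by omega
    have hb1 : (1 : ℕ) < m := by omega
    have hb2 : (2 : ℕ) < m := by omega
    have hb3 : (3 : ℕ) < m := by omega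
    by_cases h0 : D (uu ⟨0, hb0⟩) = 0
    · exact ⟨_, notR_all_one (Hm m) hone h0⟩
    by_cases h1 : D (uu ⟨1, hb1⟩) = 0
    · exact ⟨_, notR_all_one (Hm m) hone h1⟩
    by_cases h2 : D (uu ⟨2, hb2⟩) = 0
    · exact ⟨_, notR_all_one (Hm m) hone h2⟩
    by_cases h3 : D (uu ⟨3, hb3⟩) = 0
    · exact ⟨_, notR_all_one (Hm m) hone h3⟩
    · set S4 : Finset (Fin m ⊕ (Fin m ⊕ Unit)) :=
        {uu ⟨0, hb0⟩, uu ⟨1, hb1⟩, uu ⟨2, hb2⟩, uu ⟨3, hb3⟩} with hS4def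
      have hw : hmW m ∉ S4 := by simp [hS4def, hmW]
      have hsum : ∑ x ∈ insert (hmW m) S4, D x = D (hmW m) + ∑ x ∈ S4, D x :=
        Finset.sum_insert hw
      have hle : ∑ x ∈ insert (hmW m) S4, D x ≤ distSize D :=
        Finset.sum_le_sum_of_subset (Finset.subset_univ _)
      have hS4 : ∑ x ∈ S4, D x = D (uu ⟨0, hb0⟩) + (D (uu ⟨1, hb1⟩) +
          (D (uu ⟨2, hb2⟩) + D (uu ⟨3, hb3⟩))) := by
        rw [hS4def, Finset.sum_insert (by simp [Fin.ext_iff]),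
          Finset.sum_insert (by simp [Fin.ext_iff]),
          Finset.sum_insert (by simp [Fin.ext_iff]), Finset.sum_singleton]
      exact ⟨hmW m, notR_all_one (Hm m) hone (by omega)⟩

end Core
section Upper
variable {m : ℕ}

/-- distribution: 4 pebbles on w -/
def D0 (m : ℕ) : (Fin m ⊕ (Fin m ⊕ Unit)) → ℕ := fun v => if v = hmW m then 4 else 0

lemma D0_size : distSize (D0 m) = 4 := by
  simp [distSize, D0, Finset.sum_ite_eq']

lemma D0_solvable (hm : 4 ≤ m) (he : m % 2 = 0) : Solvable (Hm m) (D0 m) := by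
  intro t
  have hD0w : D0 m (hmW m) = 4 := by simp [D0]
  rcases t with i | i | u
  · have him := i.isLt
    by_cases hio : i.val % 2 = 0
    · exact reach_adj _ (by omega) (adj_wu.mpr hio)
    · by_cases hlt : i.val + 1 < m
      · refine reach_two _ (by omega) (adj_wu (i := ⟨i.val + 1, hlt⟩).mpr (by simp; omega)) ?_
        rw [adj_uu]
        simp only []
        show (i.val + 1) / 2 ≠ i.val / 2
        omega
      · refine reach_two _ (by omega) (adj_wu (i := ⟨0, by omega⟩).mpr (by simp)) ?_
        rw [adj_uu]
        show (0 : ℕ) / 2 ≠ i.val / 2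
        omega
  · have him := i.isLt
    by_cases hio : i.val % 2 = 0
    · exact reach_adj _ (by omega) (adj_wv.mpr hio)
    · by_cases hlt : i.val + 1 < m
      · refine reach_two _ (by omega) (adj_wv (i := ⟨i.val + 1, hlt⟩).mpr (by simp; omega)) ?_
        rw [adj_vv]
        show (i.val + 1) / 2 ≠ i.val / 2
        omega
      · refine reach_two _ (by omega) (adj_wv (i := ⟨0, by omega⟩).mpr (by simp)) ?_
        rw [adj_vv]
        show (0 : ℕ) / 2 ≠ i.val / 2
        omega
  · cases u
    exact reach_self _ (by rw [show (Sum.inr (Sum.inr ()) : Fin m ⊕ (Fin m ⊕ Unit)) = hmW m from rfl, hD0w]; omega)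

end Upper

section Degrees
variable {m : ℕ}

lemma degree_ge (hm : 4 ≤ m) (he : m % 2 = 0) [inst : DecidableRel (Hm m).Adj]
    (v : Fin m ⊕ (Fin m ⊕ Unit)) : m - 1 ≤ (Hm m).degree v := by
  classical
  rcases v with z | z | u
  · -- u-side vertex
    have hzm := z.isLt
    set A : Finset (Fin m ⊕ (Fin m ⊕ Unit)) :=
      (Finset.univ : Finset (Fin (m - 2))).image
        (fun r => uu ⟨if r.val < 2 * (z.val / 2) then r.val else r.val + 2, by
          have := r.isLt; split <;> omega⟩) with hA
    have hAsub : A ⊆ (Hm m).neighborFinset (uu z) := by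
      intro x hx
      rw [hA, Finset.mem_image] at hx
      obtain ⟨r, _, rfl⟩ := hx
      rw [SimpleGraph.mem_neighborFinset, adj_uu]
      show z.val / 2 ≠ (if r.val < 2 * (z.val / 2) then r.val else r.val + 2) / 2
      have := r.isLt
      split <;> omega
    have hextra : (if z.val % 2 = 1 then vv z else hmW m) ∈ (Hm m).neighborFinset (uu z) := by
      rw [SimpleGraph.mem_neighborFinset]
      split
      · rw [adj_uv]; omega
      · rw [adj_uw]; omega
    have hsub : insert (if z.val % 2 = 1 then vv z else hmW m) A ⊆ (Hm m).neighborFinset (uu z) := by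
      intro x hx
      rcases Finset.mem_insert.mp hx with rfl | hx
      · exact hextra
      · exact hAsub hx
    have hAcard : A.card = m - 2 := by
      rw [hA, Finset.card_image_of_injective _ ?_, Finset.card_univ, Fintype.card_fin]
      intro r s hrs
      simp only [uu, Sum.inl.injEq, Fin.mk.injEq] at hrs
      have := r.isLt; have := s.isLt
      apply Fin.ext
      split at hrs <;> split at hrs <;> omega
    have hnm : (if z.val % 2 = 1 then vv z else hmW m) ∉ A := by
      rw [hA, Finset.mem_image]
      rintro ⟨r, _, hr⟩
      by_cases hz : z.val % 2 = 1
      · rw [if_pos hz] at hr; exact absurd hr (by simp)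
      · rw [if_neg hz] at hr; exact absurd hr (by simp [hmW])
    have hcard : (insert (if z.val % 2 = 1 then vv z else hmW m) A).card = m - 1 := by
      rw [Finset.card_insert_of_notMem hnm, hAcard]; omega
    calc m - 1 = (insert (if z.val % 2 = 1 then vv z else hmW m) A).card := hcard.symm
      _ ≤ ((Hm m).neighborFinset (uu z)).card := Finset.card_le_card hsub
  · -- v-side vertex
    have hzm := z.isLt
    set A : Finset (Fin m ⊕ (Fin m ⊕ Unit)) :=
      (Finset.univ : Finset (Fin (m - 2))).image
        (fun r => vv ⟨if r.val < 2 * (z.val / 2) then r.val else r.val + 2, by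
          have := r.isLt; split <;> omega⟩) with hA
    have hAsub : A ⊆ (Hm m).neighborFinset (vv z) := by
      intro x hx
      rw [hA, Finset.mem_image] at hx
      obtain ⟨r, _, rfl⟩ := hx
      rw [SimpleGraph.mem_neighborFinset, adj_vv]
      show z.val / 2 ≠ (if r.val < 2 * (z.val / 2) then r.val else r.val + 2) / 2
      have := r.isLt
      split <;> omega
    have hextra : (if z.val % 2 = 1 then uu z else hmW m) ∈ (Hm m).neighborFinset (vv z) := by
      rw [SimpleGraph.mem_neighborFinset]
      split
      · rw [SimpleGraph.adj_comm, adj_uv]; omega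
      · rw [adj_vw]; omega
    have hsub : insert (if z.val % 2 = 1 then uu z else hmW m) A ⊆ (Hm m).neighborFinset (vv z) := by
      intro x hx
      rcases Finset.mem_insert.mp hx with rfl | hx
      · exact hextra
      · exact hAsub hx
    have hAcard : A.card = m - 2 := by
      rw [hA, Finset.card_image_of_injective _ ?_, Finset.card_univ, Fintype.card_fin]
      intro r s hrs
      simp only [vv, Sum.inr.injEq, Sum.inl.injEq, Fin.mk.injEq] at hrs
      have := r.isLt; have := s.isLt
      apply Fin.ext
      split at hrs <;> split at hrs <;> omega
    have hnm : (if z.val % 2 = 1 then uu z else hmW m) ∉ A := by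
      rw [hA, Finset.mem_image]
      rintro ⟨r, _, hr⟩
      by_cases hz : z.val % 2 = 1
      · rw [if_pos hz] at hr; exact absurd hr (by simp)
      · rw [if_neg hz] at hr; exact absurd hr (by simp [hmW])
    have hcard : (insert (if z.val % 2 = 1 then uu z else hmW m) A).card = m - 1 := by
      rw [Finset.card_insert_of_notMem hnm, hAcard]; omega
    calc m - 1 = (insert (if z.val % 2 = 1 then uu z else hmW m) A).card := hcard.symm
      _ ≤ ((Hm m).neighborFinset (vv z)).card := Finset.card_le_card hsub
  · -- w
    cases u
    set B1 : Finset (Fin m ⊕ (Fin m ⊕ Unit)) :=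
      (Finset.univ : Finset (Fin (m / 2))).image
        (fun r => uu ⟨2 * r.val, by have := r.isLt; omega⟩) with hB1
    set B2 : Finset (Fin m ⊕ (Fin m ⊕ Unit)) :=
      (Finset.univ : Finset (Fin (m / 2))).image
        (fun r => vv ⟨2 * r.val, by have := r.isLt; omega⟩) with hB2
    have hsub : B1 ∪ B2 ⊆ (Hm m).neighborFinset (Sum.inr (Sum.inr ())) := by
      intro x hx
      rcases Finset.mem_union.mp hx with hx | hx <;>
        rw [Finset.mem_image] at hx <;> obtain ⟨r, _, rfl⟩ := hx <;>
        rw [SimpleGraph.mem_neighborFinset,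
          show (Sum.inr (Sum.inr ()) : Fin m ⊕ (Fin m ⊕ Unit)) = hmW m from rfl]
      · rw [adj_wu]
        show 2 * r.val % 2 = 0
        omega
      · rw [adj_wv]
        show 2 * r.val % 2 = 0
        omega
    have hB1card : B1.card = m / 2 := by
      rw [hB1, Finset.card_image_of_injective _ ?_, Finset.card_univ, Fintype.card_fin]
      intro r s hrs
      simp only [uu, Sum.inl.injEq, Fin.mk.injEq] at hrs
      exact Fin.ext (by omega)
    have hB2card : B2.card = m / 2 := by
      rw [hB2, Finset.card_image_of_injective _ ?_, Finset.card_univ, Fintype.card_fin]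
      intro r s hrs
      simp only [vv, Sum.inr.injEq, Sum.inl.injEq, Fin.mk.injEq] at hrs
      exact Fin.ext (by omega)
    have hdisj : Disjoint B1 B2 := by
      rw [Finset.disjoint_left]
      intro x hx1 hx2
      rw [hB1, Finset.mem_image] at hx1
      rw [hB2, Finset.mem_image] at hx2
      obtain ⟨r, _, rfl⟩ := hx1
      obtain ⟨s, _, hs⟩ := hx2
      simp [uu, vv] at hs
    have hcard : (B1 ∪ B2).card = m := by
      rw [Finset.card_union_of_disjoint hdisj, hB1card, hB2card]; omega
    calc m - 1 ≤ m := by omega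
      _ = (B1 ∪ B2).card := hcard.symm
      _ ≤ _ := Finset.card_le_card hsub

lemma degree_u0 (hm : 4 ≤ m) (he : m % 2 = 0) [inst : DecidableRel (Hm m).Adj] :
    (Hm m).degree (uu ⟨0, by omega⟩) = m - 1 := by
  classical
  have hNeq : (Hm m).neighborFinset (uu ⟨0, by omega⟩) =
      insert (hmW m) ((Finset.univ : Finset (Fin (m - 2))).image
        (fun r => (uu ⟨r.val + 2, by have := r.isLt; omega⟩ : Fin m ⊕ (Fin m ⊕ Unit)))) := by
    ext x
    rw [SimpleGraph.mem_neighborFinset, Finset.mem_insert, Finset.mem_image]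
    constructor
    · intro hadj
      rcases x with j | j | u
      · right
        have hj := j.isLt
        rw [adj_uu] at hadj
        replace hadj : (0 : ℕ) / 2 ≠ j.val / 2 := hadj
        refine ⟨⟨j.val - 2, by omega⟩, Finset.mem_univ _, ?_⟩
        simp only [uu, Sum.inl.injEq]
        apply Fin.ext
        show j.val - 2 + 2 = j.val
        omega
      · rw [adj_uv] at hadj
        have : (0 : ℕ) = j.val ∧ (0 : ℕ) % 2 = 1 := hadj
        omega
      · cases u
        left; rfl
    · rintro (rfl | ⟨r, _, rfl⟩)
      · rw [adj_uw]
        show (0 : ℕ) % 2 = 0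
        rfl
      · rw [adj_uu]
        have := r.isLt
        show (0 : ℕ) / 2 ≠ (r.val + 2) / 2
        omega
  rw [SimpleGraph.degree, hNeq]
  rw [Finset.card_insert_of_notMem (by simp [hmW]), Finset.card_image_of_injective _ ?_,
    Finset.card_univ, Fintype.card_fin]
  · omega
  · intro r s hrs
    simp only [uu, Sum.inl.injEq, Fin.mk.injEq] at hrs
    exact Fin.ext (by omega)

lemma minDegree_eq (hm : 4 ≤ m) (he : m % 2 = 0) [inst : DecidableRel (Hm m).Adj] :
    (Hm m).minDegree = m - 1 := by
  have h1 := SimpleGraph.minDegree_le_degree (G := Hm m) (uu ⟨0, by omega⟩)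
  rw [degree_u0 hm he] at h1
  have h2 := SimpleGraph.le_minDegree_of_forall_le_degree (G := Hm m) (m - 1) (degree_ge hm he)
  omega

end Degrees

theorem Hm_large_minDegree_but_restricted_ne (m : ℕ) (hm : 4 ≤ m) (heven : Even m) :
    @SimpleGraph.minDegree _ (Hm m) _ (Classical.decRel _) =
      (Fintype.card (Fin m ⊕ (Fin m ⊕ Unit)) - 3) / 2 ∧
    optPebblingRes (Hm m) 2 ≠ optPebbling (Hm m) := by
  have he : m % 2 = 0 := Nat.even_iff.mp heven
  constructor
  · have hc : Fintype.card (Fin m ⊕ (Fin m ⊕ Unit)) = m + (m + 1) := by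
      simp [Fintype.card_sum]
    rw [hc, minDegree_eq (inst := Classical.decRel _) hm he]
    omega
  · have h4 : optPebbling (Hm m) ≤ 4 :=
      Nat.sInf_le ⟨D0 m, D0_solvable hm he, D0_size⟩
    have hne : {n | ∃ D : (Fin m ⊕ (Fin m ⊕ Unit)) → ℕ,
        (∀ v, D v ≤ 2) ∧ Solvable (Hm m) D ∧ distSize D = n}.Nonempty :=
      ⟨distSize (fun _ => 2), ⟨fun _ => 2, fun _ => le_refl 2,
        fun _ => reach_self _ one_le_two, rfl⟩⟩
    have hmem := Nat.sInf_mem hne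
    obtain ⟨D, hcap, hsol, hsz⟩ := hmem
    have h5 : 5 ≤ optPebblingRes (Hm m) 2 := by
      by_contra hcon
      push_neg at hcon
      have hsize : distSize D ≤ 4 := by
        rw [hsz]
        exact Nat.lt_succ_iff.mp hcon
      obtain ⟨t, hbad⟩ := exists_bad hm he D hcap hsize
      exact hbad (rcond_of_reachable (Hm m) hsize (hsol t))
    have hlt : optPebbling (Hm m) < optPebblingRes (Hm m) 2 :=
      lt_of_le_of_lt h4 (lt_of_lt_of_le (by norm_num) h5)
    exact ne_of_gt hlt
end

section
/- For every graph G, π*_2(G) ≤ γ_R(G), the Roman domination number of G. -/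
open Finset

/-- The Roman domination number of a graph. -/
noncomputable def romanDominationNumber {V : Type*} [Fintype V] (G : SimpleGraph V) : ℕ :=
  sInf {n | ∃ f : V → ℕ, (∀ v, f v ≤ 2) ∧
    (∀ v, f v = 0 → ∃ u, G.Adj u v ∧ f u = 2) ∧ ∑ v, f v = n}

theorem restricted_le_romanDomination {V : Type*} [Fintype V] [DecidableEq V]
    (G : SimpleGraph V) :
    optPebblingRes G 2 ≤ romanDominationNumber G := by
  have hne : {n | ∃ f : V → ℕ, (∀ v, f v ≤ 2) ∧
      (∀ v, f v = 0 → ∃ u, G.Adj u v ∧ f u = 2) ∧ ∑ v, f v = n}.Nonempty := by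
    exact ⟨∑ v : V, (2 : ℕ), fun _ => 2, fun _ => le_refl 2, fun v h => by simp at h, rfl⟩
  obtain ⟨f, hf2, hdom, hsum⟩ := Nat.sInf_mem hne
  apply Nat.sInf_le
  refine ⟨f, hf2, ?_, hsum⟩
  intro v
  by_cases h : f v = 0
  · obtain ⟨u, hadj, hu⟩ := hdom v h
    refine ⟨Function.update (Function.update f u (f u - 2)) v (f v + 1),
      Relation.ReflTransGen.single ⟨u, v, hadj, hu.ge, rfl⟩, ?_⟩
    simp
  · exact ⟨f, Relation.ReflTransGen.refl, Nat.one_le_iff_ne_zero.mpr h⟩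
end

section
/- Let G be a connected graph on 4 vertices. Then there exist two vertices x, y (the endpoints of a longest path) such that placing 2 pebbles on each of x and y yields a solvable distribution; hence π*_2(G) ≤ 4. -/
open Finset

/-! ### Auxiliary machinery -/

def adjB (f : Fin 6 → Bool) (u v : Fin 4) : Bool :=
  match u, v with
  | 0, 1 => f 0 | 1, 0 => f 0
  | 0, 2 => f 1 | 2, 0 => f 1
  | 0, 3 => f 2 | 3, 0 => f 2
  | 1, 2 => f 3 | 2, 1 => f 3
  | 1, 3 => f 4 | 3, 1 => f 4
  | 2, 3 => f 5 | 3, 2 => f 5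
  | _, _ => false

def keyProp (f : Fin 6 → Bool) : Prop :=
  (∀ S : Finset (Fin 4), (∃ a, a ∈ S) → (∃ a, a ∉ S) →
      ∃ u v, u ∈ S ∧ v ∉ S ∧ adjB f u v = true) →
    ∃ x y : Fin 4, x ≠ y ∧ ∀ v, v = x ∨ v = y ∨ adjB f x v = true ∨ adjB f y v = true ∨
      ∃ w, adjB f x w = true ∧ adjB f y w = true ∧ adjB f w v = true

instance keyDecPred : DecidablePred keyProp := fun f => by unfold keyProp; infer_instance

instance keyDec : Decidable (∀ f, keyProp f) := Fintype.decidableForallFintype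

theorem key : ∀ f, keyProp f := of_decide_eq_true (by rfl)

/-- A closed set containing one endpoint of a walk contains the other. -/
theorem boundary_edge {V : Type*} [DecidableEq V] (G : SimpleGraph V) (hconn : G.Connected)
    (S : Finset V) (hne : ∃ a, a ∈ S) (hnf : ∃ a, a ∉ S) :
    ∃ u v, u ∈ S ∧ v ∉ S ∧ G.Adj u v := by
  by_contra hno
  push_neg at hno
  obtain ⟨a, ha⟩ := hne
  obtain ⟨b, hb⟩ := hnf
  have H : ∀ (u v : V) (_ : G.Walk u v), u ∈ S → v ∈ S := by
    intro u v p
    induction p with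
    | nil => exact id
    | cons h p ih =>
        intro hu
        apply ih
        by_contra hw
        exact hno _ _ hu hw h
  exact hb (H a b (hconn.preconnected a b).some ha)

theorem reach_of_self {V : Type*} [DecidableEq V] (G : SimpleGraph V) (D : V → ℕ) (v : V)
    (h : 1 ≤ D v) : KReachable G D 1 v :=
  ⟨D, Relation.ReflTransGen.refl, h⟩

theorem reach_of_adj {V : Type*} [DecidableEq V] (G : SimpleGraph V) (D : V → ℕ) (u v : V)
    (hadj : G.Adj u v) (hu : 2 ≤ D u) : KReachable G D 1 v := by
  refine ⟨Function.update (Function.update D u (D u - 2)) v (D v + 1),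
    Relation.ReflTransGen.single ⟨u, v, hadj, hu, rfl⟩, ?_⟩
  rw [Function.update_self]
  omega

theorem common_reach {V : Type*} [DecidableEq V] (G : SimpleGraph V) (x y w v : V) (hxy : x ≠ y)
    (hxw : G.Adj x w) (hyw : G.Adj y w) (hwv : G.Adj w v) :
    KReachable G (fun u => if u = x ∨ u = y then 2 else 0) 1 v := by
  set D : V → ℕ := fun u => if u = x ∨ u = y then 2 else 0 with hD
  have hwx : w ≠ x := fun h => G.irrefl (h ▸ hxw)
  have hwy : w ≠ y := fun h => G.irrefl (h ▸ hyw)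
  have hDx : D x = 2 := by simp [hD]
  have hDy : D y = 2 := by simp [hD]
  have hDw : D w = 0 := by simp [hD, hwx, hwy]
  set D1 : V → ℕ := Function.update (Function.update D x (D x - 2)) w (D w + 1) with hD1
  have s1 : PebblingStep G D D1 := ⟨x, w, hxw, by omega, rfl⟩
  have hD1y : D1 y = 2 := by
    rw [hD1, Function.update_of_ne (Ne.symm hwy), Function.update_of_ne (Ne.symm hxy), hDy]
  have hD1w : D1 w = 1 := by rw [hD1, Function.update_self, hDw]
  set D2 : V → ℕ := Function.update (Function.update D1 y (D1 y - 2)) w (D1 w + 1) with hD2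
  have s2 : PebblingStep G D1 D2 := ⟨y, w, hyw, by omega, rfl⟩
  have hD2w : D2 w = 2 := by rw [hD2, Function.update_self, hD1w]
  set D3 : V → ℕ := Function.update (Function.update D2 w (D2 w - 2)) v (D2 v + 1) with hD3
  have s3 : PebblingStep G D2 D3 := ⟨w, v, hwv, by omega, rfl⟩
  refine ⟨D3, ((Relation.ReflTransGen.single s1).tail s2).tail s3, ?_⟩
  rw [hD3, Function.update_self]
  omega

theorem four_vertex_connected_two_two {V : Type*} [Fintype V] [DecidableEq V]
    (G : SimpleGraph V) (hconn : G.Connected) (hcard : Fintype.card V = 4) :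
    (∃ x y : V, x ≠ y ∧ Solvable G (fun v => if v = x ∨ v = y then 2 else 0)) ∧
    optPebblingRes G 2 ≤ 4 := by
  classical
  let e : V ≃ Fin 4 := Fintype.equivFinOfCardEq hcard
  let f : Fin 6 → Bool := fun i =>
    match i with
    | 0 => decide (G.Adj (e.symm 0) (e.symm 1))
    | 1 => decide (G.Adj (e.symm 0) (e.symm 2))
    | 2 => decide (G.Adj (e.symm 0) (e.symm 3))
    | 3 => decide (G.Adj (e.symm 1) (e.symm 2))
    | 4 => decide (G.Adj (e.symm 1) (e.symm 3))
    | 5 => decide (G.Adj (e.symm 2) (e.symm 3))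
  have hadjB : ∀ u v : Fin 4, adjB f u v = true ↔ G.Adj (e.symm u) (e.symm v) := by
    intro u v
    fin_cases u <;> fin_cases v <;>
      simp only [Fin.reduceFinMk, Fin.isValue, adjB, f, decide_eq_true_eq, Bool.false_eq_true, false_iff] <;>
      first
        | rfl
        | exact G.adj_comm _ _
        | exact G.irrefl
  -- hypothesis of key
  have hkeyhyp : ∀ S : Finset (Fin 4), (∃ a, a ∈ S) → (∃ a, a ∉ S) →
      ∃ u v, u ∈ S ∧ v ∉ S ∧ adjB f u v = true := by
    intro S ⟨a, haS⟩ ⟨b, hbS⟩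
    obtain ⟨u, v, huS, hvS, huv⟩ := boundary_edge G hconn (S.image e.symm)
      ⟨e.symm a, Finset.mem_image_of_mem _ haS⟩
      ⟨e.symm b, by
        intro hmem
        obtain ⟨c, hc, hce⟩ := Finset.mem_image.mp hmem
        exact hbS (e.symm.injective hce ▸ hc)⟩
    obtain ⟨u0, hu0, hu0e⟩ := Finset.mem_image.mp huS
    refine ⟨u0, e v, hu0, ?_, ?_⟩
    · intro hmem
      exact hvS (by simpa using Finset.mem_image_of_mem e.symm hmem)
    · rw [hadjB, hu0e, Equiv.symm_apply_apply]
      exact huv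
  obtain ⟨x0, y0, hxy0, hP⟩ := key f hkeyhyp
  set x := e.symm x0 with hx
  set y := e.symm y0 with hy
  have hxy : x ≠ y := fun h => hxy0 (e.symm.injective h)
  have hprop : ∀ v : V, v = x ∨ v = y ∨ G.Adj x v ∨ G.Adj y v ∨
      ∃ w : V, G.Adj x w ∧ G.Adj y w ∧ G.Adj w v := by
    intro v
    rcases hP (e v) with h | h | h | h | ⟨w0, h1, h2, h3⟩
    · exact Or.inl (by rw [hx, ← h, Equiv.symm_apply_apply])
    · exact Or.inr (Or.inl (by rw [hy, ← h, Equiv.symm_apply_apply]))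
    · exact Or.inr (Or.inr (Or.inl (by simpa [Equiv.symm_apply_apply] using (hadjB x0 (e v)).mp h)))
    · exact Or.inr (Or.inr (Or.inr (Or.inl
        (by simpa [Equiv.symm_apply_apply] using (hadjB y0 (e v)).mp h))))
    · refine Or.inr (Or.inr (Or.inr (Or.inr ⟨e.symm w0, (hadjB x0 w0).mp h1, (hadjB y0 w0).mp h2,
        by simpa [Equiv.symm_apply_apply] using (hadjB w0 (e v)).mp h3⟩)))
  set D : V → ℕ := fun v => if v = x ∨ v = y then 2 else 0 with hDdef
  have hDx : D x = 2 := by simp [hDdef]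
  have hDy : D y = 2 := by simp [hDdef]
  have hsolv : Solvable G D := by
    intro v
    rcases hprop v with h | h | h | h | ⟨w, h1, h2, h3⟩
    · exact reach_of_self G D v (by rw [h, hDx]; omega)
    · exact reach_of_self G D v (by rw [h, hDy]; omega)
    · exact reach_of_adj G D x v h (by rw [hDx])
    · exact reach_of_adj G D y v h (by rw [hDy])
    · exact common_reach G x y w v hxy h1 h2 h3
  refine ⟨⟨x, y, hxy, hsolv⟩, ?_⟩
  have hsize : distSize D = 4 := by
    have : ∀ v : V, D v = (if v = x then 2 else 0) + (if v = y then 2 else 0) := by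
      intro v
      by_cases h1 : v = x
      · subst h1; simp [hDdef, hxy]
      · by_cases h2 : v = y
        · subst h2; simp [hDdef, h1]
        · simp [hDdef, h1, h2]
    rw [distSize]
    simp only [this]
    rw [Finset.sum_add_distrib, Finset.sum_ite_eq' Finset.univ x (fun _ => 2),
      Finset.sum_ite_eq' Finset.univ y (fun _ => 2)]
    simp
  exact Nat.sInf_le ⟨D, fun v => by rw [hDdef]; dsimp only; split <;> omega, hsolv, hsize⟩
end
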